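/- The assumption of totalness does not affect the logic E: a formula of the language of E is valid in the class of all preference models if and only if it is valid in the class of preference models whose betterness relation ≽ is total (for all worlds s and t, either s ≽ t or t ≽ s). -/
import Mathlib


/-- Formulas of Åqvist's dyadic deontic logic **E**:
`φ ::= p | ¬φ | φ∧φ | □φ | ○(φ/φ)`.
`EForm.ob ψ φ` denotes `○(ψ/φ)` ("ψ is obligatory, given φ"). -/
inductive EForm : Type where
  | atom : ℕ → EForm
  | neg  : EForm → EForm
  | conj : EForm → EForm → EForm
  | box  : EForm → EForm
  | ob   : EForm → EForm → EForm
deriving DecidableEq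

/-- Material implication, defined classically. -/
def EForm.impl (φ ψ : EForm) : EForm := .neg (.conj φ (.neg ψ))

/-- Biconditional. -/
def EForm.iff' (φ ψ : EForm) : EForm := .conj (φ.impl ψ) (ψ.impl φ)

/-- A preference model `M = (W, ≽, V)`: a nonempty set of worlds, a betterness
relation, and a valuation. -/
structure PrefModel where
  W : Type
  ne : Nonempty W
  R : W → W → Prop
  V : ℕ → W → Prop

/-- Satisfaction `M,s ⊨ φ`. In particular
`M,s ⊨ ○(ψ/φ)` iff `opt_≽(‖φ‖) ⊆ ‖ψ‖`, where
`opt_≽(‖φ‖) = {w ∈ ‖φ‖ : ∀ y, (M,y ⊨ φ) → w ≽ y}`. -/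
def PrefModel.sat (M : PrefModel) : M.W → EForm → Prop
  | s, .atom n   => M.V n s
  | s, .neg φ    => ¬ PrefModel.sat M s φ
  | s, .conj φ ψ => PrefModel.sat M s φ ∧ PrefModel.sat M s ψ
  | _, .box φ    => ∀ t, PrefModel.sat M t φ
  | _, .ob ψ φ   => ∀ w, (PrefModel.sat M w φ ∧ ∀ y, PrefModel.sat M y φ → M.R w y) →
                     PrefModel.sat M w ψ

/-- Validity in the class of all preference models. -/
def EValid (φ : EForm) : Prop := ∀ (M : PrefModel) (s : M.W), M.sat s φ

/-- Totalization of a preference model: duplicate each world countably many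
times and make `(w,n) ≽ (v,m)` whenever `w ≽ v` or `m ≤ n`. -/
def PrefModel.totalize (M : PrefModel) : PrefModel where
  W := M.W × ℕ
  ne := ⟨⟨Classical.choice M.ne, 0⟩⟩
  R := fun a b => M.R a.1 b.1 ∨ b.2 ≤ a.2
  V := fun n a => M.V n a.1

lemma totalize_total (M : PrefModel) :
    ∀ s t : M.totalize.W, M.totalize.R s t ∨ M.totalize.R t s := by
  intro s t
  rcases le_total t.2 s.2 with h | h
  · exact Or.inl (Or.inr h)
  · exact Or.inr (Or.inr h)

lemma totalize_sat (M : PrefModel) :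
    ∀ (φ : EForm) (w : M.W) (n : ℕ), M.totalize.sat (w, n) φ ↔ M.sat w φ := by
  intro φ
  induction φ with
  | atom k => intro w n; exact Iff.rfl
  | neg φ ih => intro w n; exact not_congr (ih w n)
  | conj φ ψ ih1 ih2 => intro w n; exact and_congr (ih1 w n) (ih2 w n)
  | box φ ih =>
    intro w n
    constructor
    · intro h t; exact (ih t 0).mp (h (t, 0))
    · intro h t; exact (ih t.1 t.2).mpr (h t.1)
  | ob ψ φ ih1 ih2 =>
    intro w n
    constructor
    · intro h v hv
      refine (ih1 v 0).mp (h (v, 0) ⟨(ih2 v 0).mpr hv.1, ?_⟩)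
      intro y hy
      exact Or.inl (hv.2 y.1 ((ih2 y.1 y.2).mp hy))
    · intro h v hv
      refine (ih1 v.1 v.2).mpr (h v.1 ⟨(ih2 v.1 v.2).mp hv.1, ?_⟩)
      intro y hy
      rcases hv.2 (y, v.2 + 1) ((ih2 y (v.2 + 1)).mpr hy) with h' | h'
      · exact h'
      · omega


/-- **Totalness does not affect the logic E**: a formula is valid in the class
of all preference models iff it is valid in the class of preference models
whose betterness relation is total. -/

theorem E_total_idle :
    ∀ φ : EForm,
      EValid φ ↔
        (∀ M : PrefModel, (∀ s t : M.W, M.R s t ∨ M.R t s) → ∀ s : M.W, M.sat s φ) := by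
  intro φ
  constructor
  · intro h M _ s; exact h M s
  · intro h M s
    have := h M.totalize (totalize_total M) (s, 0)
    exact (totalize_sat M φ s 0).mp this
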